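/- (Proposition 2.5) For every port-numbered graph of diameter D, with level of symmetry λ and with Λ defined as the smallest t such that Π_t = Π_{t+1}, it holds that Λ ≤ D + λ. -/

import Mathlib

/-- A port-numbered graph on vertex type `V`: a finite connected simple graph in which,
at every vertex `v` of degree `deg v`, the incident edges are labeled by distinct port
numbers `0, …, deg v - 1`.  `next v i = some (u, j)` means that the edge with port
number `i` at `v` leads to the vertex `u`, at which it has port number `j`. -/
structure PortGraph (V : Type*) [Fintype V] where
  /-- the degree of each vertex -/
  deg : V → ℕ
  /-- `next v i = some (u, j)` iff the edge with port `i` at `v` has `u` as its other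
  endpoint, where it carries port number `j` -/
  next : V → ℕ → Option (V × ℕ)
  /-- exactly the ports `0, …, deg v - 1` are present at `v` -/
  next_isSome : ∀ v i, (next v i).isSome ↔ i < deg v
  /-- the port labeling is consistent at the two endpoints of every edge -/
  next_symm : ∀ v i u j, next v i = some (u, j) → next u j = some (v, i)
  /-- no self-loops -/
  next_ne : ∀ v i u j, next v i = some (u, j) → u ≠ v
  /-- no multiple edges: distinct ports at `v` lead to distinct neighbors -/
  next_inj : ∀ v i i' u j j', next v i = some (u, j) → next v i' = some (u, j') → i = i'
  /-- the graph is connected -/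
  connected : ∀ u v : V, Relation.ReflTransGen (fun a b => ∃ i j, next a i = some (b, j)) u v

namespace PortGraph

variable {V : Type*} [Fintype V]

/-- `P.viewEq t u v` means that the views of `u` and `v` truncated at depth `t` are equal:
`V^t(u) = V^t(v)`. -/
def viewEq (P : PortGraph V) : ℕ → V → V → Prop
  | 0, u, v => P.deg u = P.deg v
  | t + 1, u, v =>
      P.deg u = P.deg v ∧
        ∀ (i j j' : ℕ) (u' v' : V),
          P.next u i = some (u', j) → P.next v i = some (v', j') →
          j = j' ∧ viewEq P t u' v'

/-- `P.ViewEq u v` means that the (infinite) views of `u` and `v` are equal: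
`V(u) = V(v)`, i.e. `V^t(u) = V^t(v)` for every `t`. -/
def ViewEq (P : PortGraph V) (u v : V) : Prop := ∀ t, P.viewEq t u v

end PortGraph

namespace PortGraph

variable {V : Type*} [Fintype V]

/-- adjacency relation of a port-numbered graph -/
def Adj (P : PortGraph V) (a b : V) : Prop := ∃ i j, P.next a i = some (b, j)

/-- the underlying simple graph of a port-numbered graph -/
def toSimpleGraph (P : PortGraph V) : SimpleGraph V where
  Adj := P.Adj
  symm := by
    constructor
    rintro a b ⟨i, j, h⟩
    exact ⟨j, i, P.next_symm a i b j h⟩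
  loopless := by
    constructor
    rintro a ⟨i, j, h⟩
    exact P.next_ne a i a j h rfl

/-- `P.IsDiameter D` means that the diameter of `P` (the maximum distance between two
vertices) equals `D`. -/
def IsDiameter (P : PortGraph V) (D : ℕ) : Prop :=
  (∀ u v : V, P.toSimpleGraph.dist u v ≤ D) ∧ ∃ u v : V, P.toSimpleGraph.dist u v = D

end PortGraph

namespace PortGraph

variable {V : Type*} [Fintype V]

/-- `P.SymAt t` holds if there is a vertex `v` with
`{u : V^t(u) = V^t(v)} = {u : V(u) = V(v)}`.  The level of symmetry of `P` is the least
such `t`. -/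
def SymAt (P : PortGraph V) (t : ℕ) : Prop :=
  ∃ v : V, ∀ u : V, P.viewEq t u v ↔ P.ViewEq u v

end PortGraph


namespace PortGraph

variable {V : Type*} [Fintype V]

theorem viewEq_symm (P : PortGraph V) : ∀ (t : ℕ) {u v : V}, P.viewEq t u v → P.viewEq t v u
  | 0, u, v, h => h.symm
  | t+1, u, v, ⟨hd, hc⟩ => ⟨hd.symm, fun i j j' v' u' hv hu => by
      obtain ⟨hj, hvw⟩ := hc i j' j u' v' hu hv
      exact ⟨hj.symm, P.viewEq_symm t hvw⟩⟩

theorem viewEq_succ (P : PortGraph V) : ∀ (t : ℕ) {u v : V}, P.viewEq (t+1) u v → P.viewEq t u v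
  | 0, _, _, h => h.1
  | t+1, _, _, ⟨hd, hc⟩ => ⟨hd, fun i j j' u' v' hu hv => by
      obtain ⟨hj, h'⟩ := hc i j j' u' v' hu hv
      exact ⟨hj, P.viewEq_succ t h'⟩⟩

theorem viewEq_add (P : PortGraph V) : ∀ (k t : ℕ) {u v : V},
    P.viewEq (t + k) u v → P.viewEq t u v
  | 0, _, _, _, h => h
  | k+1, t, _, _, h => P.viewEq_add k t (P.viewEq_succ (t + k) h)

theorem viewEq_of_le (P : PortGraph V) {t t' : ℕ} (h : t ≤ t') {u v : V}
    (hv : P.viewEq t' u v) : P.viewEq t u v := by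
  obtain ⟨k, rfl⟩ := Nat.exists_eq_add_of_le h
  exact P.viewEq_add k t hv

theorem viewEq_step (P : PortGraph V) {a b a' : V} {i j : ℕ} (h : P.ViewEq a b)
    (ha : P.next a i = some (a', j)) :
    ∃ b', P.next b i = some (b', j) ∧ P.ViewEq a' b' := by
  obtain ⟨hd, hc⟩ := h 1
  have hia : (P.next a i).isSome := by simp [ha]
  have hi : i < P.deg b := hd ▸ (P.next_isSome a i).mp hia
  obtain ⟨⟨b', j'⟩, hb'⟩ := Option.isSome_iff_exists.mp ((P.next_isSome b i).mpr hi)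
  obtain ⟨hj, -⟩ := hc i j j' a' b' ha hb'
  subst hj
  refine ⟨b', hb', fun t => ?_⟩
  obtain ⟨-, hc'⟩ := h (t+1)
  exact (hc' i j j a' b' ha hb').2

theorem reachable_aux (P : PortGraph V) (u v : V) : P.toSimpleGraph.Reachable u v := by
  have h := P.connected u v
  induction h with
  | refl => exact SimpleGraph.Reachable.refl u
  | tail _ hbc ih => exact ih.trans (SimpleGraph.Adj.reachable hbc)

theorem viewEq_of_walk (P : PortGraph V) (lam : ℕ) :
    ∀ {u c : V} (p : P.toSimpleGraph.Walk u c) (v : V),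
      (∀ w, P.viewEq lam w c ↔ P.ViewEq w c) →
      P.viewEq (lam + p.length) u v → P.ViewEq u v := by
  intro u c p
  induction p with
  | nil =>
    intro v hc h
    simp only [SimpleGraph.Walk.length_nil, Nat.add_zero] at h
    exact fun t => P.viewEq_symm t ((hc v).mp (P.viewEq_symm _ h) t)
  | @cons u u₁ c hadj p ih =>
    intro v hc h
    obtain ⟨i, j, hui⟩ := hadj
    change P.viewEq (lam + (p.length + 1)) u v at h
    have h' : P.viewEq (lam + p.length + 1) u v := by
      rwa [show lam + (p.length + 1) = lam + p.length + 1 by omega] at h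
    obtain ⟨hd, hcnd⟩ := h'
    have hia : (P.next u i).isSome := by simp [hui]
    have hi : i < P.deg v := hd ▸ (P.next_isSome u i).mp hia
    obtain ⟨⟨v₁, j'⟩, hvi⟩ := Option.isSome_iff_exists.mp ((P.next_isSome v i).mpr hi)
    obtain ⟨hj, hV⟩ := hcnd i j j' u₁ v₁ hui hvi
    subst hj
    have hVE : P.ViewEq u₁ v₁ := ih v₁ hc hV
    obtain ⟨b, hb, hb2⟩ := P.viewEq_step hVE (P.next_symm u i u₁ j hui)
    have hbv : b = v := by
      have h2 := P.next_symm v i v₁ j hvi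
      rw [h2] at hb
      exact (Prod.mk.injEq .. ▸ Option.some.inj hb).1.symm
    rw [hbv] at hb2
    exact hb2

end PortGraph

/-- (Proposition 2.5) For every port-numbered graph of diameter `D`, with level of
symmetry `λ`, and with `Λ` the smallest `t` such that `Π_t = Π_{t+1}`, it holds that
`Λ ≤ D + λ`. -/
theorem Lambda_le_diam_add_levelOfSymmetry {V : Type*} [Fintype V] (P : PortGraph V)
    (D lam Lam : ℕ) (hD : P.IsDiameter D)
    (hlam : IsLeast {t : ℕ | P.SymAt t} lam)
    (hLam : IsLeast {t : ℕ | ∀ u v : V, P.viewEq t u v ↔ P.viewEq (t + 1) u v} Lam) :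
    Lam ≤ D + lam := by
  obtain ⟨c, hc⟩ := hlam.1
  apply hLam.2
  intro u v
  constructor
  · intro h
    obtain ⟨p, hp⟩ := (P.reachable_aux u c).exists_walk_length_eq_dist
    have hlen : p.length ≤ D := hp ▸ hD.1 u c
    rw [Nat.add_comm] at h
    have h' : P.viewEq (lam + p.length) u v :=
      P.viewEq_of_le (Nat.add_le_add_left hlen lam) h
    exact (P.viewEq_of_walk lam p v hc h') (D + lam + 1)
  · intro h
    exact P.viewEq_succ _ h
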